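/- Let f₁, f₂ : (0, ∞) → ℂ be square-integrable. Then the function (x, y) ↦ (Re(conj(f₁(x))·f₁(y)) + Re(conj(f₂(x))·f₂(y)))/(x + y) − (2(x + y)/(x² + y²))·Re(conj(f₁(x))·f₂(y)) is integrable on (0, ∞) × (0, ∞), and ∫₀^∞∫₀^∞ [ (Re(conj(f₁(x))f₁(y)) + Re(conj(f₂(x))f₂(y)))/(x + y) − (2(x + y)/(x² + y²))·Re(conj(f₁(x))f₂(y)) ] dx dy ≤ π·(‖f₁‖₂² + 2√2·‖f₁‖₂·‖f₂‖₂ + ‖f₂‖₂²) ≤ π·(1 + √2)·(‖f₁‖₂² + ‖f₂‖₂²). -/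

import Mathlib

open MeasureTheory Set Filter Real

lemma sq_image : (fun u : ℝ => u ^ 2) '' Set.Ioi 0 = Set.Ioi 0 := by
  ext y
  simp only [Set.mem_image, Set.mem_Ioi]
  constructor
  · rintro ⟨u, hu, rfl⟩; positivity
  · intro hy; exact ⟨Real.sqrt y, Real.sqrt_pos.2 hy, Real.sq_sqrt hy.le⟩

lemma sq_deriv : ∀ u ∈ Set.Ioi (0:ℝ), HasDerivWithinAt (fun u : ℝ => u ^ 2) (2 * u) (Set.Ioi 0) u := by
  intro u _
  simpa [mul_comm] using (hasDerivAt_pow 2 u).hasDerivWithinAt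

lemma sq_inj : Set.InjOn (fun u : ℝ => u ^ 2) (Set.Ioi 0) := by
  intro a ha b hb hab
  simp only [Set.mem_Ioi] at ha hb
  have h : (a - b) * (a + b) = 0 := by simp only at hab; nlinarith
  rcases mul_eq_zero.1 h with h | h
  · linarith
  · linarith

lemma ker1 (x : ℝ) (hx : 0 < x) :
    IntegrableOn (fun y => Real.sqrt (x / y) * (1 / (x + y))) (Set.Ioi 0) ∧
    ∫ y in Set.Ioi 0, Real.sqrt (x / y) * (1 / (x + y)) = Real.pi := by
  have hsx : 0 < Real.sqrt x := Real.sqrt_pos.2 hx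
  have hx2 : Real.sqrt x ^ 2 = x := Real.sq_sqrt hx.le
  set φ : ℝ → ℝ := fun y => Real.sqrt (x / y) * (1 / (x + y)) with hφ
  -- the transformed integrand
  set ψ : ℝ → ℝ := fun u => 2 * Real.sqrt x / (x + u ^ 2) with hψ
  have heq : Set.EqOn (fun u : ℝ => |2 * u| • φ (u ^ 2)) ψ (Set.Ioi 0) := by
    intro u hu
    simp only [Set.mem_Ioi] at hu
    have h1 : Real.sqrt (x / u ^ 2) = Real.sqrt x / u := by
      rw [Real.sqrt_div hx.le, Real.sqrt_sq hu.le]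
    simp only [smul_eq_mul, hφ, hψ, h1, abs_of_pos (by linarith : (0:ℝ) < 2 * u)]
    field_simp
  -- FTC on the u-side
  have hG : ∀ u : ℝ, HasDerivAt (fun u => 2 * Real.arctan (u / Real.sqrt x)) (ψ u) u := by
    intro u
    have h0 : HasDerivAt (fun u : ℝ => u / Real.sqrt x) (1 / Real.sqrt x) u := by
      simpa using (hasDerivAt_id u).div_const (Real.sqrt x)
    have h1 := ((Real.hasDerivAt_arctan (u / Real.sqrt x)).comp u h0).const_mul 2
    refine h1.congr_deriv (Eq.symm ?_)
    have hd : 0 < x + u ^ 2 := by positivity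
    rw [hψ]
    field_simp
    nlinarith [hx2, sq_nonneg u]
  have hlim : Tendsto (fun u => 2 * Real.arctan (u / Real.sqrt x)) atTop (nhds Real.pi) := by
    have h0 : Tendsto (fun u : ℝ => u / Real.sqrt x) atTop atTop :=
      Filter.Tendsto.atTop_div_const hsx tendsto_id
    have h1 := (Real.tendsto_arctan_atTop.mono_right nhdsWithin_le_nhds).comp h0
    have h2 := h1.const_mul (2:ℝ)
    convert h2 using 2
    · rfl
    · ring
  have hpos : ∀ u ∈ Set.Ioi (0:ℝ), 0 ≤ ψ u := by
    intro u _
    have : 0 < x + u ^ 2 := by positivity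
    positivity
  have hcont : ContinuousWithinAt (fun u => 2 * Real.arctan (u / Real.sqrt x)) (Set.Ici 0) 0 :=
    (hG 0).continuousAt.continuousWithinAt
  have hint : IntegrableOn ψ (Set.Ioi 0) :=
    integrableOn_Ioi_deriv_of_nonneg hcont (fun u _ => hG u) hpos hlim
  have hval : ∫ u in Set.Ioi 0, ψ u = Real.pi := by
    rw [integral_Ioi_of_hasDerivAt_of_nonneg hcont (fun u _ => hG u) hpos hlim]
    simp
  constructor
  · rw [← sq_image]
    rw [integrableOn_image_iff_integrableOn_abs_deriv_smul measurableSet_Ioi sq_deriv sq_inj]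
    exact (hint.congr_fun heq.symm measurableSet_Ioi).congr_fun (fun u hu => rfl) measurableSet_Ioi
  · rw [← sq_image, integral_image_eq_integral_abs_deriv_smul measurableSet_Ioi sq_deriv sq_inj,
      setIntegral_congr_fun measurableSet_Ioi heq, hval]

lemma ker2 (x : ℝ) (hx : 0 < x) :
    IntegrableOn (fun y => Real.sqrt (x / y) * ((x + y) / (x ^ 2 + y ^ 2))) (Set.Ioi 0) ∧
    ∫ y in Set.Ioi 0, Real.sqrt (x / y) * ((x + y) / (x ^ 2 + y ^ 2)) = Real.sqrt 2 * Real.pi := by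
  have hsx : 0 < Real.sqrt x := Real.sqrt_pos.2 hx
  have hx2 : Real.sqrt x ^ 2 = x := Real.sq_sqrt hx.le
  have h22 : Real.sqrt 2 ^ 2 = 2 := Real.sq_sqrt (by norm_num)
  have hs2 : 0 < Real.sqrt 2 := Real.sqrt_pos.2 (by norm_num)
  set c : ℝ := Real.sqrt 2 / Real.sqrt x with hc
  have hcpos : 0 < c := by positivity
  set φ : ℝ → ℝ := fun y => Real.sqrt (x / y) * ((x + y) / (x ^ 2 + y ^ 2)) with hφ
  set ψ : ℝ → ℝ := fun u => 2 * Real.sqrt x * ((x + u ^ 2) / (x ^ 2 + u ^ 4)) with hψ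
  have hd4 : ∀ u : ℝ, 0 < x ^ 2 + u ^ 4 := fun u => by positivity
  have heq : Set.EqOn (fun u : ℝ => |2 * u| • φ (u ^ 2)) ψ (Set.Ioi 0) := by
    intro u hu
    simp only [Set.mem_Ioi] at hu
    have h1 : Real.sqrt (x / u ^ 2) = Real.sqrt x / u := by
      rw [Real.sqrt_div hx.le, Real.sqrt_sq hu.le]
    simp only [smul_eq_mul, hφ, hψ, h1, abs_of_pos (by linarith : (0:ℝ) < 2 * u)]
    have := hd4 u
    field_simp
  set G : ℝ → ℝ := fun u => Real.sqrt 2 * (Real.arctan (c * u - 1) + Real.arctan (c * u + 1))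
    with hGdef
  have hG : ∀ u : ℝ, HasDerivAt G (ψ u) u := by
    intro u
    have hl : HasDerivAt (fun u : ℝ => c * u) c u := by
      simpa using (hasDerivAt_id u).const_mul c
    have h1 : HasDerivAt (fun u : ℝ => Real.arctan (c * u - 1))
        (1 / (1 + (c * u - 1) ^ 2) * c) u :=
      HasDerivAt.comp (h₂ := Real.arctan) u (Real.hasDerivAt_arctan (c * u - 1)) (hl.sub_const 1)
    have h2 : HasDerivAt (fun u : ℝ => Real.arctan (c * u + 1))
        (1 / (1 + (c * u + 1) ^ 2) * c) u :=
      HasDerivAt.comp (h₂ := Real.arctan) u (Real.hasDerivAt_arctan (c * u + 1)) (hl.add_const 1)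
    have h3 := (h1.add h2).const_mul (Real.sqrt 2)
    refine h3.congr_deriv (Eq.symm ?_)
    have e1 : 0 < 1 + (c * u - 1) ^ 2 := by positivity
    have e2 : 0 < 1 + (c * u + 1) ^ 2 := by positivity
    have hd := hd4 u
    have hc2 : c ^ 2 = 2 / x := by rw [hc, div_pow, hx2, h22]
    have hrc : Real.sqrt 2 * c = 2 * Real.sqrt x / x := by
      have hmm : Real.sqrt 2 * Real.sqrt 2 = 2 := Real.mul_self_sqrt (by norm_num)
      rw [hc, ← mul_div_assoc, hmm, div_eq_div_iff hsx.ne' hx.ne']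
      linear_combination (-2 : ℝ) * hx2
    have hc2' : c ^ 2 * x = 2 := by rw [hc2]; field_simp
    have hsum : (1 + (c * u - 1) ^ 2) + (1 + (c * u + 1) ^ 2) = 4 * (x + u ^ 2) / x := by
      rw [eq_div_iff hx.ne']
      linear_combination 2 * u ^ 2 * hc2'
    have hprod : (1 + (c * u - 1) ^ 2) * (1 + (c * u + 1) ^ 2) = 4 * (x ^ 2 + u ^ 4) / x ^ 2 := by
      rw [eq_div_iff (pow_ne_zero 2 hx.ne')]
      linear_combination u ^ 4 * (c ^ 2 * x + 2) * hc2'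
    have step : Real.sqrt 2 * (1 / (1 + (c * u - 1) ^ 2) * c + 1 / (1 + (c * u + 1) ^ 2) * c)
        = (Real.sqrt 2 * c) * (((1 + (c * u - 1) ^ 2) + (1 + (c * u + 1) ^ 2)) /
          ((1 + (c * u - 1) ^ 2) * (1 + (c * u + 1) ^ 2))) := by
      field_simp
      ring
    rw [hψ]
    rw [step, hrc, hsum, hprod]
    field_simp
  have hlim : Tendsto G atTop (nhds (Real.sqrt 2 * Real.pi)) := by
    have h0 : Tendsto (fun u : ℝ => c * u) atTop atTop :=
      Filter.Tendsto.const_mul_atTop hcpos tendsto_id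
    have hm : Tendsto (fun u : ℝ => c * u - 1) atTop atTop := tendsto_atTop_add_const_right _ _ h0
    have hp : Tendsto (fun u : ℝ => c * u + 1) atTop atTop := tendsto_atTop_add_const_right _ _ h0
    have t1 := (Real.tendsto_arctan_atTop.mono_right nhdsWithin_le_nhds).comp hm
    have t2 := (Real.tendsto_arctan_atTop.mono_right nhdsWithin_le_nhds).comp hp
    have := ((t1.add t2).const_mul (Real.sqrt 2))
    convert this using 2
    · rfl
    · ring
  have hpos : ∀ u ∈ Set.Ioi (0:ℝ), 0 ≤ ψ u := by
    intro u _
    have h1 : 0 ≤ x + u ^ 2 := by positivity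
    have := hd4 u
    have : (0:ℝ) ≤ (x + u ^ 2) / (x ^ 2 + u ^ 4) := div_nonneg h1 (hd4 u).le
    positivity
  have hcont : ContinuousWithinAt G (Set.Ici 0) 0 := (hG 0).continuousAt.continuousWithinAt
  have hint : IntegrableOn ψ (Set.Ioi 0) :=
    integrableOn_Ioi_deriv_of_nonneg hcont (fun u _ => hG u) hpos hlim
  have hG0 : G 0 = 0 := by
    simp [hGdef, Real.arctan_neg, Real.arctan_one]
  have hval : ∫ u in Set.Ioi 0, ψ u = Real.sqrt 2 * Real.pi := by
    rw [integral_Ioi_of_hasDerivAt_of_nonneg hcont (fun u _ => hG u) hpos hlim, hG0, sub_zero]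
  constructor
  · rw [← sq_image]
    rw [integrableOn_image_iff_integrableOn_abs_deriv_smul measurableSet_Ioi sq_deriv sq_inj]
    exact hint.congr_fun heq.symm measurableSet_Ioi
  · rw [← sq_image, integral_image_eq_integral_abs_deriv_smul measurableSet_Ioi sq_deriv sq_inj,
      setIntegral_congr_fun measurableSet_Ioi heq, hval]

set_option maxHeartbeats 1000000 in
lemma schur_bound (K : ℝ → ℝ → ℝ) (hKm : Measurable (Function.uncurry K))
    (hK0 : ∀ x y : ℝ, 0 < x → 0 < y → 0 ≤ K x y)
    (hKsym : ∀ x y : ℝ, K x y = K y x)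
    (C : ℝ)
    (hC : ∀ x : ℝ, 0 < x →
      IntegrableOn (fun y => Real.sqrt (x / y) * K x y) (Set.Ioi 0) ∧
      ∫ y in Set.Ioi 0, Real.sqrt (x / y) * K x y = C)
    (g h : ℝ → ℝ)
    (hg : AEStronglyMeasurable g (volume.restrict (Set.Ioi 0)))
    (hh : AEStronglyMeasurable h (volume.restrict (Set.Ioi 0)))
    (hgn : ∀ x, 0 ≤ g x) (hhn : ∀ x, 0 ≤ h x)
    (hg2 : Integrable (fun x => g x ^ 2) (volume.restrict (Set.Ioi 0)))
    (hh2 : Integrable (fun x => h x ^ 2) (volume.restrict (Set.Ioi 0)))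
    (ε : ℝ) (hε : 0 < ε) :
    Integrable (fun z : ℝ × ℝ => K z.1 z.2 * (g z.1 * h z.2))
      ((volume.restrict (Set.Ioi 0)).prod (volume.restrict (Set.Ioi 0))) ∧
    (∫ z : ℝ × ℝ, K z.1 z.2 * (g z.1 * h z.2)
        ∂((volume.restrict (Set.Ioi 0)).prod (volume.restrict (Set.Ioi 0)))) ≤
      C / 2 * (ε * (∫ x in Set.Ioi 0, g x ^ 2) + ε⁻¹ * (∫ x in Set.Ioi 0, h x ^ 2)) := by
  set μ : Measure ℝ := volume.restrict (Set.Ioi 0) with hμ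
  have hC0 : 0 ≤ C := by
    rcases hC 1 one_pos with ⟨hi, hv⟩
    rw [← hv]
    apply integral_nonneg_of_ae
    filter_upwards [ae_restrict_mem measurableSet_Ioi] with y hy
    exact mul_nonneg (Real.sqrt_nonneg _) (hK0 1 y one_pos hy)
  -- B₁ and B₂
  set B₁ : ℝ × ℝ → ℝ := fun z => ε * g z.1 ^ 2 / 2 * (Real.sqrt (z.1 / z.2) * K z.1 z.2)
    with hB₁def
  set B₂ : ℝ × ℝ → ℝ := fun z => ε⁻¹ * h z.2 ^ 2 / 2 * (Real.sqrt (z.2 / z.1) * K z.1 z.2)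
    with hB₂def
  have hKm' : AEStronglyMeasurable (fun z : ℝ × ℝ => K z.1 z.2) (μ.prod μ) :=
    hKm.aestronglyMeasurable
  have hsqm : ∀ (p : Bool), Measurable (fun z : ℝ × ℝ =>
      Real.sqrt ((if p then z.1 else z.2) / (if p then z.2 else z.1))) := by
    intro p
    cases p <;>
      exact Real.continuous_sqrt.measurable.comp (Measurable.div (by measurability) (by measurability))
  have hgf : AEStronglyMeasurable (fun z : ℝ × ℝ => g z.1 ^ 2) (μ.prod μ) := by
    simpa [pow_two, Pi.mul_def] using hg.comp_fst.mul hg.comp_fst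
  have hhs : AEStronglyMeasurable (fun z : ℝ × ℝ => h z.2 ^ 2) (μ.prod μ) := by
    simpa [pow_two, Pi.mul_def] using hh.comp_snd.mul hh.comp_snd
  have hB₁m : AEStronglyMeasurable B₁ (μ.prod μ) := by
    refine (((aestronglyMeasurable_const (b := ε/2)).mul hgf).mul
      ((hsqm true).aestronglyMeasurable.mul hKm')).congr
      (Filter.Eventually.of_forall fun z => ?_)
    simp only [hB₁def, Pi.mul_apply, if_true]
    ring
  have hB₂m : AEStronglyMeasurable B₂ (μ.prod μ) := by
    refine (((aestronglyMeasurable_const (b := ε⁻¹/2)).mul hhs).mul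
      ((hsqm false).aestronglyMeasurable.mul hKm')).congr
      (Filter.Eventually.of_forall fun z => ?_)
    simp only [hB₂def, Pi.mul_apply, Bool.false_eq_true, if_false]
    ring
  -- integrability and integral of B₁
  have key₁ : ∀ x : ℝ, 0 < x → (∫ y, ‖B₁ (x, y)‖ ∂μ) = ε * g x ^ 2 / 2 * C := by
    intro x hx
    have : (fun y => ‖B₁ (x, y)‖) =ᵐ[μ] fun y => ε * g x ^ 2 / 2 * (Real.sqrt (x / y) * K x y) := by
      filter_upwards [ae_restrict_mem measurableSet_Ioi] with y hy
      have h1 : 0 ≤ ε * g x ^ 2 / 2 := by positivity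
      have h2 : 0 ≤ Real.sqrt (x / y) * K x y :=
        mul_nonneg (Real.sqrt_nonneg _) (hK0 x y hx hy)
      rw [Real.norm_eq_abs, hB₁def, abs_of_nonneg (mul_nonneg h1 h2)]
    rw [integral_congr_ae this, integral_const_mul, (hC x hx).2]
  have hB₁slice : ∀ᵐ x ∂μ, Integrable (fun y => B₁ (x, y)) μ := by
    filter_upwards [ae_restrict_mem measurableSet_Ioi] with x hx
    exact ((hC x hx).1.const_mul (ε * g x ^ 2 / 2))
  have hB₁int : Integrable B₁ (μ.prod μ) := by
    refine (integrable_prod_iff hB₁m).2 ⟨hB₁slice, ?_⟩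
    have : (fun x => ∫ y, ‖B₁ (x, y)‖ ∂μ) =ᵐ[μ] fun x => ε * C / 2 * g x ^ 2 := by
      filter_upwards [ae_restrict_mem measurableSet_Ioi] with x hx
      rw [key₁ x hx]; ring
    exact (hg2.const_mul (ε * C / 2)).congr this.symm
  have hB₁val : ∫ z, B₁ z ∂(μ.prod μ) = ε * C / 2 * ∫ x, g x ^ 2 ∂μ := by
    rw [integral_prod _ hB₁int]
    have : (fun x => ∫ y, B₁ (x, y) ∂μ) =ᵐ[μ] fun x => ε * C / 2 * g x ^ 2 := by
      filter_upwards [ae_restrict_mem measurableSet_Ioi] with x hx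
      have : ∫ y, B₁ (x, y) ∂μ = ε * g x ^ 2 / 2 * C := by
        rw [show (fun y => B₁ (x, y)) = fun y => ε * g x ^ 2 / 2 * (Real.sqrt (x / y) * K x y)
          from rfl]
        rw [integral_const_mul, (hC x hx).2]
      rw [this]; ring
    rw [integral_congr_ae this, integral_const_mul]
  -- integrability and integral of B₂
  have hB₂eq : ∀ y : ℝ, 0 < y → (fun x => B₂ (x, y)) =
      fun x => ε⁻¹ * h y ^ 2 / 2 * (Real.sqrt (y / x) * K y x) := by
    intro y hy
    funext x
    rw [hB₂def]
    simp only
    rw [hKsym x y]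
  have key₂ : ∀ y : ℝ, 0 < y → (∫ x, ‖B₂ (x, y)‖ ∂μ) = ε⁻¹ * h y ^ 2 / 2 * C := by
    intro y hy
    have : (fun x => ‖B₂ (x, y)‖) =ᵐ[μ] fun x => ε⁻¹ * h y ^ 2 / 2 * (Real.sqrt (y / x) * K y x) := by
      filter_upwards [ae_restrict_mem measurableSet_Ioi] with x hx
      have h1 : 0 ≤ ε⁻¹ * h y ^ 2 / 2 := by positivity
      have h2 : 0 ≤ Real.sqrt (y / x) * K x y :=
        mul_nonneg (Real.sqrt_nonneg _) (hK0 x y hx hy)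
      rw [Real.norm_eq_abs, hB₂def, abs_of_nonneg (mul_nonneg h1 h2), hKsym x y]
    rw [integral_congr_ae this, integral_const_mul, (hC y hy).2]
  have hB₂slice : ∀ᵐ y ∂μ, Integrable (fun x => B₂ (x, y)) μ := by
    filter_upwards [ae_restrict_mem measurableSet_Ioi] with y hy
    rw [hB₂eq y hy]
    exact ((hC y hy).1.const_mul (ε⁻¹ * h y ^ 2 / 2))
  have hB₂int : Integrable B₂ (μ.prod μ) := by
    refine (integrable_prod_iff' hB₂m).2 ⟨hB₂slice, ?_⟩
    have : (fun y => ∫ x, ‖B₂ (x, y)‖ ∂μ) =ᵐ[μ] fun y => ε⁻¹ * C / 2 * h y ^ 2 := by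
      filter_upwards [ae_restrict_mem measurableSet_Ioi] with y hy
      rw [key₂ y hy]; ring
    exact (hh2.const_mul (ε⁻¹ * C / 2)).congr this.symm
  have hB₂val : ∫ z, B₂ z ∂(μ.prod μ) = ε⁻¹ * C / 2 * ∫ y, h y ^ 2 ∂μ := by
    rw [integral_prod_symm _ hB₂int]
    have : (fun y => ∫ x, B₂ (x, y) ∂μ) =ᵐ[μ] fun y => ε⁻¹ * C / 2 * h y ^ 2 := by
      filter_upwards [ae_restrict_mem measurableSet_Ioi] with y hy
      rw [hB₂eq y hy, integral_const_mul, (hC y hy).2]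
      ring
    rw [integral_congr_ae this, integral_const_mul]
  -- pointwise domination
  have haeq : ∀ᵐ z : ℝ × ℝ ∂(μ.prod μ), 0 < z.1 ∧ 0 < z.2 := by
    rw [hμ, Measure.prod_restrict]
    filter_upwards [ae_restrict_mem (measurableSet_Ioi.prod measurableSet_Ioi)] with z hz
    exact hz
  have hdom : ∀ᵐ z : ℝ × ℝ ∂(μ.prod μ),
      K z.1 z.2 * (g z.1 * h z.2) ≤ B₁ z + B₂ z ∧ 0 ≤ K z.1 z.2 * (g z.1 * h z.2) := by
    filter_upwards [haeq] with z hz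
    obtain ⟨hx, hy⟩ := hz
    set x := z.1; set y := z.2
    have hsq : 0 < Real.sqrt (x / y) := Real.sqrt_pos.2 (div_pos hx hy)
    set w : ℝ := ε * Real.sqrt (x / y) with hw
    have hwpos : 0 < w := by positivity
    have hwinv : w⁻¹ = ε⁻¹ * Real.sqrt (y / x) := by
      rw [hw, mul_inv, ← Real.sqrt_inv, inv_div]
    have hamgm : g x * h y ≤ (w * g x ^ 2 + w⁻¹ * h y ^ 2) / 2 := by
      rw [← sub_nonneg]
      have hid : (w * g x ^ 2 + w⁻¹ * h y ^ 2) / 2 - g x * h y =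
          (w ^ 2 * g x ^ 2 + h y ^ 2 - 2 * (w * (g x * h y))) / (2 * w) := by
        field_simp
      rw [hid]
      exact div_nonneg (by nlinarith [sq_nonneg (w * g x - h y)]) (by positivity)
    have hKnn : 0 ≤ K x y := hK0 x y hx hy
    constructor
    · have := mul_le_mul_of_nonneg_left hamgm hKnn
      calc K x y * (g x * h y) ≤ K x y * ((w * g x ^ 2 + w⁻¹ * h y ^ 2) / 2) := this
        _ = B₁ z + B₂ z := by
            rw [hB₁def, hB₂def, hw, hwinv]
            simp only
            ring
    · exact mul_nonneg hKnn (mul_nonneg (hgn x) (hhn y))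
  -- conclusion
  have hPm : AEStronglyMeasurable (fun z : ℝ × ℝ => K z.1 z.2 * (g z.1 * h z.2)) (μ.prod μ) :=
    hKm'.mul (hg.comp_fst.mul hh.comp_snd)
  have hBint : Integrable (fun z => B₁ z + B₂ z) (μ.prod μ) := hB₁int.add hB₂int
  have hPint : Integrable (fun z : ℝ × ℝ => K z.1 z.2 * (g z.1 * h z.2)) (μ.prod μ) := by
    refine hBint.mono hPm ?_
    filter_upwards [hdom] with z hz
    rw [Real.norm_eq_abs, Real.norm_eq_abs, abs_of_nonneg hz.2]
    exact hz.1.trans (le_abs_self _)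
  refine ⟨hPint, ?_⟩
  have hle : ∫ z, K z.1 z.2 * (g z.1 * h z.2) ∂(μ.prod μ) ≤ ∫ z, B₁ z + B₂ z ∂(μ.prod μ) := by
    apply integral_mono_ae hPint hBint
    filter_upwards [hdom] with z hz using hz.1
  calc ∫ z, K z.1 z.2 * (g z.1 * h z.2) ∂(μ.prod μ) ≤ ∫ z, B₁ z + B₂ z ∂(μ.prod μ) := hle
    _ = ε * C / 2 * (∫ x, g x ^ 2 ∂μ) + ε⁻¹ * C / 2 * (∫ x, h x ^ 2 ∂μ) := by
        rw [integral_add hB₁int hB₂int, hB₁val, hB₂val]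
    _ = C / 2 * (ε * (∫ x, g x ^ 2 ∂μ) + ε⁻¹ * (∫ x, h x ^ 2 ∂μ)) := by
        ring

lemma eps_elim {X C a b : ℝ} (hC : 0 ≤ C) (ha : 0 ≤ a) (hb : 0 ≤ b)
    (H : ∀ ε : ℝ, 0 < ε → X ≤ C / 2 * (ε * a ^ 2 + ε⁻¹ * b ^ 2)) : X ≤ C * a * b := by
  rcases eq_or_lt_of_le ha with ha0 | ha'
  · -- a = 0
    by_contra hcon
    push_neg at hcon
    have hX : 0 < X := by
      have h0 : C * a * b = 0 := by rw [← ha0]; ring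
      linarith [h0.ge.trans_lt hcon]
    obtain ⟨ε, hε, h3⟩ : ∃ ε : ℝ, 0 < ε ∧ X * ε = C * b ^ 2 + X :=
      ⟨C * b ^ 2 / X + 1, by positivity, by field_simp⟩
    have h1 := H ε hε
    have h1' : X ≤ C / 2 * (ε⁻¹ * b ^ 2) := by
      have h0 : ε * a ^ 2 = 0 := by rw [← ha0]; ring
      rw [h0, zero_add] at h1
      exact h1
    have h2 : X * ε ≤ C / 2 * b ^ 2 := by
      have := mul_le_mul_of_nonneg_right h1' hε.le
      calc X * ε ≤ C / 2 * (ε⁻¹ * b ^ 2) * ε := this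
        _ = C / 2 * b ^ 2 := by field_simp
    linarith [h2, h3, hX, mul_nonneg hC (sq_nonneg b)]
  · rcases eq_or_lt_of_le hb with hb0 | hb'
    · -- b = 0
      by_contra hcon
      push_neg at hcon
      have hX : 0 < X := by
        have h0 : C * a * b = 0 := by rw [← hb0]; ring
        linarith [h0.ge.trans_lt hcon]
      have hd : 0 < C * a ^ 2 + X := by positivity
      obtain ⟨ε, hε, hεd⟩ : ∃ ε : ℝ, 0 < ε ∧ ε * (C * a ^ 2 + X) = X :=
        ⟨X / (C * a ^ 2 + X), by positivity, by field_simp⟩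
      have h1 := H ε hε
      have h1' : X ≤ C / 2 * (ε * a ^ 2) := by
        have h0 : ε⁻¹ * b ^ 2 = 0 := by rw [← hb0]; ring
        rw [h0, add_zero] at h1
        exact h1
      nlinarith [mul_le_mul_of_nonneg_right h1' hd.le, hεd, hX,
        mul_nonneg (mul_nonneg hC (sq_nonneg a)) hX.le]
    · -- a, b > 0
      have h1 := H (b / a) (div_pos hb' ha')
      have h2 : C / 2 * (b / a * a ^ 2 + (b / a)⁻¹ * b ^ 2) = C * a * b := by
        rw [inv_div]
        field_simp
        ring
      linarith [h1, h2.ge]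

set_option maxHeartbeats 1000000 in
/-- **The core estimate for `τ₀ ≤ 3 + 2√2` in Section 6.** For square-integrable
`f₁, f₂` on `(0, ∞)`, the kernel expression is integrable on `(0,∞) × (0,∞)` and its
integral is at most `π(‖f₁‖₂² + 2√2 ‖f₁‖₂ ‖f₂‖₂ + ‖f₂‖₂²) ≤ π(1+√2)(‖f₁‖₂² + ‖f₂‖₂²)`. -/
theorem stmt19 (f₁ f₂ : ℝ → ℂ)
    (h1 : MemLp f₁ 2 (volume.restrict (Set.Ioi 0)))
    (h2 : MemLp f₂ 2 (volume.restrict (Set.Ioi 0))) :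
    Integrable
      (fun z : ℝ × ℝ =>
        ((starRingEnd ℂ (f₁ z.1) * f₁ z.2).re + (starRingEnd ℂ (f₂ z.1) * f₂ z.2).re) /
            (z.1 + z.2) -
          2 * (z.1 + z.2) / (z.1 ^ 2 + z.2 ^ 2) * (starRingEnd ℂ (f₁ z.1) * f₂ z.2).re)
      ((volume.restrict (Set.Ioi 0)).prod (volume.restrict (Set.Ioi 0))) ∧
    (∫ z : ℝ × ℝ,
        (((starRingEnd ℂ (f₁ z.1) * f₁ z.2).re + (starRingEnd ℂ (f₂ z.1) * f₂ z.2).re) /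
            (z.1 + z.2) -
          2 * (z.1 + z.2) / (z.1 ^ 2 + z.2 ^ 2) * (starRingEnd ℂ (f₁ z.1) * f₂ z.2).re)
        ∂((volume.restrict (Set.Ioi 0)).prod (volume.restrict (Set.Ioi 0)))) ≤
      Real.pi * ((Real.sqrt (∫ x in Set.Ioi (0:ℝ), ‖f₁ x‖ ^ 2)) ^ 2 +
        2 * Real.sqrt 2 * Real.sqrt (∫ x in Set.Ioi (0:ℝ), ‖f₁ x‖ ^ 2) *
          Real.sqrt (∫ x in Set.Ioi (0:ℝ), ‖f₂ x‖ ^ 2) +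
        (Real.sqrt (∫ x in Set.Ioi (0:ℝ), ‖f₂ x‖ ^ 2)) ^ 2) ∧
    Real.pi * ((Real.sqrt (∫ x in Set.Ioi (0:ℝ), ‖f₁ x‖ ^ 2)) ^ 2 +
        2 * Real.sqrt 2 * Real.sqrt (∫ x in Set.Ioi (0:ℝ), ‖f₁ x‖ ^ 2) *
          Real.sqrt (∫ x in Set.Ioi (0:ℝ), ‖f₂ x‖ ^ 2) +
        (Real.sqrt (∫ x in Set.Ioi (0:ℝ), ‖f₂ x‖ ^ 2)) ^ 2) ≤
      Real.pi * (1 + Real.sqrt 2) *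
        ((∫ x in Set.Ioi (0:ℝ), ‖f₁ x‖ ^ 2) + ∫ x in Set.Ioi (0:ℝ), ‖f₂ x‖ ^ 2) := by
  have hf1 := h1.aestronglyMeasurable
  have hf2 := h2.aestronglyMeasurable
  have hg : AEStronglyMeasurable (fun x => ‖f₁ x‖) (volume.restrict (Set.Ioi 0)) := hf1.norm
  have hh : AEStronglyMeasurable (fun x => ‖f₂ x‖) (volume.restrict (Set.Ioi 0)) := hf2.norm
  have hg2 : Integrable (fun x => ‖f₁ x‖ ^ 2) (volume.restrict (Set.Ioi 0)) :=
    h1.norm.integrable_sq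
  have hh2 : Integrable (fun x => ‖f₂ x‖ ^ 2) (volume.restrict (Set.Ioi 0)) :=
    h2.norm.integrable_sq
  have hgn : ∀ x, (0:ℝ) ≤ ‖f₁ x‖ := fun x => norm_nonneg _
  have hhn : ∀ x, (0:ℝ) ≤ ‖f₂ x‖ := fun x => norm_nonneg _
  have hI₁0 : (0:ℝ) ≤ ∫ x in Set.Ioi (0:ℝ), ‖f₁ x‖ ^ 2 :=
    integral_nonneg fun x => sq_nonneg _
  have hI₂0 : (0:ℝ) ≤ ∫ x in Set.Ioi (0:ℝ), ‖f₂ x‖ ^ 2 :=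
    integral_nonneg fun x => sq_nonneg _
  -- kernel 1 Schur bound, applied to (g, g) and (h, h) with ε = 1
  have hK₁m : Measurable (Function.uncurry (fun x y : ℝ => 1 / (x + y))) :=
    measurable_const.div (measurable_fst.add measurable_snd)
  have hK₁0 : ∀ x y : ℝ, 0 < x → 0 < y → 0 ≤ (fun x y : ℝ => 1 / (x + y)) x y := by
    intro x y hx hy; positivity
  have hK₁sym : ∀ x y : ℝ, (fun x y : ℝ => 1 / (x + y)) x y = (fun x y : ℝ => 1 / (x + y)) y x := by
    intro x y; simp only; rw [add_comm]
  obtain ⟨hP₁int, hP₁le⟩ := schur_bound (fun x y => 1 / (x + y)) hK₁m hK₁0 hK₁sym Real.pi ker1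
    (fun x => ‖f₁ x‖) (fun x => ‖f₁ x‖) hg hg hgn hgn hg2 hg2 1 one_pos
  obtain ⟨hP₂int, hP₂le⟩ := schur_bound (fun x y => 1 / (x + y)) hK₁m hK₁0 hK₁sym Real.pi ker1
    (fun x => ‖f₂ x‖) (fun x => ‖f₂ x‖) hh hh hhn hhn hh2 hh2 1 one_pos
  have hP₁le' : (∫ z : ℝ × ℝ, 1 / (z.1 + z.2) * (‖f₁ z.1‖ * ‖f₁ z.2‖)
      ∂((volume.restrict (Set.Ioi 0)).prod (volume.restrict (Set.Ioi 0)))) ≤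
      Real.pi * ∫ x in Set.Ioi (0:ℝ), ‖f₁ x‖ ^ 2 := by
    refine hP₁le.trans_eq ?_
    rw [inv_one]; ring
  have hP₂le' : (∫ z : ℝ × ℝ, 1 / (z.1 + z.2) * (‖f₂ z.1‖ * ‖f₂ z.2‖)
      ∂((volume.restrict (Set.Ioi 0)).prod (volume.restrict (Set.Ioi 0)))) ≤
      Real.pi * ∫ x in Set.Ioi (0:ℝ), ‖f₂ x‖ ^ 2 := by
    refine hP₂le.trans_eq ?_
    rw [inv_one]; ring
  -- kernel 2
  have hK₂m : Measurable (Function.uncurry (fun x y : ℝ => 2 * ((x + y) / (x ^ 2 + y ^ 2)))) :=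
    measurable_const.mul ((measurable_fst.add measurable_snd).div
      ((measurable_fst.pow_const 2).add (measurable_snd.pow_const 2)))
  have hK₂0 : ∀ x y : ℝ, 0 < x → 0 < y → 0 ≤ (fun x y : ℝ => 2 * ((x + y) / (x ^ 2 + y ^ 2))) x y := by
    intro x y hx hy; positivity
  have hK₂sym : ∀ x y : ℝ, (fun x y : ℝ => 2 * ((x + y) / (x ^ 2 + y ^ 2))) x y
      = (fun x y : ℝ => 2 * ((x + y) / (x ^ 2 + y ^ 2))) y x := by
    intro x y; simp only; rw [add_comm x y, add_comm (x ^ 2) (y ^ 2)]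
  have hC₂ : ∀ x : ℝ, 0 < x →
      IntegrableOn (fun y => Real.sqrt (x / y) * (2 * ((x + y) / (x ^ 2 + y ^ 2)))) (Set.Ioi 0) ∧
      ∫ y in Set.Ioi 0, Real.sqrt (x / y) * (2 * ((x + y) / (x ^ 2 + y ^ 2)))
        = 2 * (Real.sqrt 2 * Real.pi) := by
    intro x hx
    have hk := ker2 x hx
    have heqf : (fun y => Real.sqrt (x / y) * (2 * ((x + y) / (x ^ 2 + y ^ 2))))
        = fun y => 2 * (Real.sqrt (x / y) * ((x + y) / (x ^ 2 + y ^ 2))) := by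
      funext y; ring
    constructor
    · rw [heqf]; exact hk.1.const_mul 2
    · rw [heqf, integral_const_mul, hk.2]
  obtain ⟨hP₃int, _⟩ := schur_bound (fun x y => 2 * ((x + y) / (x ^ 2 + y ^ 2))) hK₂m hK₂0 hK₂sym
    (2 * (Real.sqrt 2 * Real.pi)) hC₂
    (fun x => ‖f₁ x‖) (fun x => ‖f₂ x‖) hg hh hgn hhn hg2 hh2 1 one_pos
  have hP₃le : (∫ z : ℝ × ℝ, 2 * ((z.1 + z.2) / (z.1 ^ 2 + z.2 ^ 2)) * (‖f₁ z.1‖ * ‖f₂ z.2‖)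
      ∂((volume.restrict (Set.Ioi 0)).prod (volume.restrict (Set.Ioi 0)))) ≤
      2 * (Real.sqrt 2 * Real.pi) * Real.sqrt (∫ x in Set.Ioi (0:ℝ), ‖f₁ x‖ ^ 2) *
        Real.sqrt (∫ x in Set.Ioi (0:ℝ), ‖f₂ x‖ ^ 2) := by
    refine eps_elim (by positivity) (Real.sqrt_nonneg _) (Real.sqrt_nonneg _) ?_
    intro ε hε
    rw [Real.sq_sqrt hI₁0, Real.sq_sqrt hI₂0]
    exact (schur_bound (fun x y => 2 * ((x + y) / (x ^ 2 + y ^ 2))) hK₂m hK₂0 hK₂sym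
      (2 * (Real.sqrt 2 * Real.pi)) hC₂
      (fun x => ‖f₁ x‖) (fun x => ‖f₂ x‖) hg hh hgn hhn hg2 hh2 ε hε).2
  -- abbreviations
  set μ2 := (volume.restrict (Set.Ioi (0:ℝ))).prod (volume.restrict (Set.Ioi (0:ℝ))) with hμ2
  -- almost-everywhere membership in the positive quadrant
  have haeq : ∀ᵐ z : ℝ × ℝ ∂μ2, 0 < z.1 ∧ 0 < z.2 := by
    rw [hμ2, Measure.prod_restrict]
    filter_upwards [ae_restrict_mem (measurableSet_Ioi.prod measurableSet_Ioi)] with z hz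
    exact hz
  have hre : ∀ u v : ℂ, |(starRingEnd ℂ u * v).re| ≤ ‖u‖ * ‖v‖ := by
    intro u v
    calc |(starRingEnd ℂ u * v).re| ≤ ‖starRingEnd ℂ u * v‖ :=
          Complex.abs_re_le_norm _
      _ = ‖u‖ * ‖v‖ := by
          rw [norm_mul, Complex.norm_conj]
  -- pointwise domination
  have hdom : ∀ᵐ z : ℝ × ℝ ∂μ2,
      |((starRingEnd ℂ (f₁ z.1) * f₁ z.2).re + (starRingEnd ℂ (f₂ z.1) * f₂ z.2).re) /
            (z.1 + z.2) -
          2 * (z.1 + z.2) / (z.1 ^ 2 + z.2 ^ 2) * (starRingEnd ℂ (f₁ z.1) * f₂ z.2).re| ≤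
        1 / (z.1 + z.2) * (‖f₁ z.1‖ * ‖f₁ z.2‖) + 1 / (z.1 + z.2) * (‖f₂ z.1‖ * ‖f₂ z.2‖) +
          2 * ((z.1 + z.2) / (z.1 ^ 2 + z.2 ^ 2)) * (‖f₁ z.1‖ * ‖f₂ z.2‖) := by
    filter_upwards [haeq] with z hz
    obtain ⟨hx, hy⟩ := hz
    have d1 : 0 < z.1 + z.2 := by linarith
    have d2 : 0 < z.1 ^ 2 + z.2 ^ 2 := by positivity
    have co : 0 ≤ 2 * (z.1 + z.2) / (z.1 ^ 2 + z.2 ^ 2) := by positivity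
    have hA : |(starRingEnd ℂ (f₁ z.1) * f₁ z.2).re + (starRingEnd ℂ (f₂ z.1) * f₂ z.2).re|
        ≤ ‖f₁ z.1‖ * ‖f₁ z.2‖ + ‖f₂ z.1‖ * ‖f₂ z.2‖ :=
      (abs_add_le _ _).trans (add_le_add (hre _ _) (hre _ _))
    have t1 : |((starRingEnd ℂ (f₁ z.1) * f₁ z.2).re + (starRingEnd ℂ (f₂ z.1) * f₂ z.2).re) /
        (z.1 + z.2)| ≤ (‖f₁ z.1‖ * ‖f₁ z.2‖ + ‖f₂ z.1‖ * ‖f₂ z.2‖) / (z.1 + z.2) := by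
      rw [abs_div, abs_of_pos d1]
      gcongr
    have t2 : |2 * (z.1 + z.2) / (z.1 ^ 2 + z.2 ^ 2) * (starRingEnd ℂ (f₁ z.1) * f₂ z.2).re|
        ≤ 2 * (z.1 + z.2) / (z.1 ^ 2 + z.2 ^ 2) * (‖f₁ z.1‖ * ‖f₂ z.2‖) := by
      rw [abs_mul, abs_of_nonneg co]
      exact mul_le_mul_of_nonneg_left (hre _ _) co
    calc |((starRingEnd ℂ (f₁ z.1) * f₁ z.2).re + (starRingEnd ℂ (f₂ z.1) * f₂ z.2).re) /
            (z.1 + z.2) -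
          2 * (z.1 + z.2) / (z.1 ^ 2 + z.2 ^ 2) * (starRingEnd ℂ (f₁ z.1) * f₂ z.2).re|
        ≤ |((starRingEnd ℂ (f₁ z.1) * f₁ z.2).re + (starRingEnd ℂ (f₂ z.1) * f₂ z.2).re) /
            (z.1 + z.2)| +
          |2 * (z.1 + z.2) / (z.1 ^ 2 + z.2 ^ 2) * (starRingEnd ℂ (f₁ z.1) * f₂ z.2).re| :=
          abs_sub _ _
      _ ≤ (‖f₁ z.1‖ * ‖f₁ z.2‖ + ‖f₂ z.1‖ * ‖f₂ z.2‖) / (z.1 + z.2) +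
          2 * (z.1 + z.2) / (z.1 ^ 2 + z.2 ^ 2) * (‖f₁ z.1‖ * ‖f₂ z.2‖) := add_le_add t1 t2
      _ = 1 / (z.1 + z.2) * (‖f₁ z.1‖ * ‖f₁ z.2‖) + 1 / (z.1 + z.2) * (‖f₂ z.1‖ * ‖f₂ z.2‖) +
          2 * ((z.1 + z.2) / (z.1 ^ 2 + z.2 ^ 2)) * (‖f₁ z.1‖ * ‖f₂ z.2‖) := by ring
  -- measurability of the expression
  have hexprm : AEStronglyMeasurable
      (fun z : ℝ × ℝ =>
        ((starRingEnd ℂ (f₁ z.1) * f₁ z.2).re + (starRingEnd ℂ (f₂ z.1) * f₂ z.2).re) /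
            (z.1 + z.2) -
          2 * (z.1 + z.2) / (z.1 ^ 2 + z.2 ^ 2) * (starRingEnd ℂ (f₁ z.1) * f₂ z.2).re) μ2 := by
    have a1 : AEMeasurable (fun z : ℝ × ℝ => f₁ z.1) μ2 := hf1.comp_fst.aemeasurable
    have a2 : AEMeasurable (fun z : ℝ × ℝ => f₁ z.2) μ2 := hf1.comp_snd.aemeasurable
    have a3 : AEMeasurable (fun z : ℝ × ℝ => f₂ z.1) μ2 := hf2.comp_fst.aemeasurable
    have a4 : AEMeasurable (fun z : ℝ × ℝ => f₂ z.2) μ2 := hf2.comp_snd.aemeasurable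
    have c : Measurable (starRingEnd ℂ) := Complex.continuous_conj.measurable
    have r : Measurable Complex.re := Complex.measurable_re
    have m11 : AEMeasurable (fun z : ℝ × ℝ => (starRingEnd ℂ (f₁ z.1) * f₁ z.2).re) μ2 :=
      r.comp_aemeasurable ((c.comp_aemeasurable a1).mul a2)
    have m22 : AEMeasurable (fun z : ℝ × ℝ => (starRingEnd ℂ (f₂ z.1) * f₂ z.2).re) μ2 :=
      r.comp_aemeasurable ((c.comp_aemeasurable a3).mul a4)
    have m12 : AEMeasurable (fun z : ℝ × ℝ => (starRingEnd ℂ (f₁ z.1) * f₂ z.2).re) μ2 :=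
      r.comp_aemeasurable ((c.comp_aemeasurable a1).mul a4)
    have md : Measurable (fun z : ℝ × ℝ => z.1 + z.2) := measurable_fst.add measurable_snd
    have mc : Measurable (fun z : ℝ × ℝ => 2 * (z.1 + z.2) / (z.1 ^ 2 + z.2 ^ 2)) :=
      (measurable_const.mul md).div ((measurable_fst.pow_const 2).add (measurable_snd.pow_const 2))
    exact (((m11.add m22).div md.aemeasurable).sub (mc.aemeasurable.mul m12)).aestronglyMeasurable
  -- integrability
  have hSint : Integrable (fun z : ℝ × ℝ =>
      1 / (z.1 + z.2) * (‖f₁ z.1‖ * ‖f₁ z.2‖) + 1 / (z.1 + z.2) * (‖f₂ z.1‖ * ‖f₂ z.2‖) +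
        2 * ((z.1 + z.2) / (z.1 ^ 2 + z.2 ^ 2)) * (‖f₁ z.1‖ * ‖f₂ z.2‖)) μ2 :=
    (hP₁int.add hP₂int).add hP₃int
  have hexprint : Integrable
      (fun z : ℝ × ℝ =>
        ((starRingEnd ℂ (f₁ z.1) * f₁ z.2).re + (starRingEnd ℂ (f₂ z.1) * f₂ z.2).re) /
            (z.1 + z.2) -
          2 * (z.1 + z.2) / (z.1 ^ 2 + z.2 ^ 2) * (starRingEnd ℂ (f₁ z.1) * f₂ z.2).re) μ2 := by
    refine hSint.mono hexprm ?_
    filter_upwards [hdom] with z hz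
    rw [Real.norm_eq_abs, Real.norm_eq_abs]
    exact hz.trans (le_abs_self _)
  refine ⟨hexprint, ?_, ?_⟩
  · -- the main integral bound
    have step1 : (∫ z : ℝ × ℝ,
        (((starRingEnd ℂ (f₁ z.1) * f₁ z.2).re + (starRingEnd ℂ (f₂ z.1) * f₂ z.2).re) /
            (z.1 + z.2) -
          2 * (z.1 + z.2) / (z.1 ^ 2 + z.2 ^ 2) * (starRingEnd ℂ (f₁ z.1) * f₂ z.2).re) ∂μ2) ≤
        ∫ z : ℝ × ℝ, (1 / (z.1 + z.2) * (‖f₁ z.1‖ * ‖f₁ z.2‖) +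
          1 / (z.1 + z.2) * (‖f₂ z.1‖ * ‖f₂ z.2‖) +
          2 * ((z.1 + z.2) / (z.1 ^ 2 + z.2 ^ 2)) * (‖f₁ z.1‖ * ‖f₂ z.2‖)) ∂μ2 := by
      apply integral_mono_ae hexprint hSint
      filter_upwards [hdom] with z hz
      exact (le_abs_self _).trans hz
    have step2 : ∫ z : ℝ × ℝ, (1 / (z.1 + z.2) * (‖f₁ z.1‖ * ‖f₁ z.2‖) +
          1 / (z.1 + z.2) * (‖f₂ z.1‖ * ‖f₂ z.2‖) +
          2 * ((z.1 + z.2) / (z.1 ^ 2 + z.2 ^ 2)) * (‖f₁ z.1‖ * ‖f₂ z.2‖)) ∂μ2 =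
        (∫ z : ℝ × ℝ, 1 / (z.1 + z.2) * (‖f₁ z.1‖ * ‖f₁ z.2‖) ∂μ2) +
        (∫ z : ℝ × ℝ, 1 / (z.1 + z.2) * (‖f₂ z.1‖ * ‖f₂ z.2‖) ∂μ2) +
        (∫ z : ℝ × ℝ, 2 * ((z.1 + z.2) / (z.1 ^ 2 + z.2 ^ 2)) * (‖f₁ z.1‖ * ‖f₂ z.2‖) ∂μ2) := by
      have h12 : Integrable (fun z : ℝ × ℝ =>
          1 / (z.1 + z.2) * (‖f₁ z.1‖ * ‖f₁ z.2‖) + 1 / (z.1 + z.2) * (‖f₂ z.1‖ * ‖f₂ z.2‖)) μ2 :=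
        hP₁int.add hP₂int
      rw [integral_add h12 hP₃int, integral_add hP₁int hP₂int]
    have step3 : (∫ z : ℝ × ℝ,
        (((starRingEnd ℂ (f₁ z.1) * f₁ z.2).re + (starRingEnd ℂ (f₂ z.1) * f₂ z.2).re) /
            (z.1 + z.2) -
          2 * (z.1 + z.2) / (z.1 ^ 2 + z.2 ^ 2) * (starRingEnd ℂ (f₁ z.1) * f₂ z.2).re) ∂μ2) ≤
        Real.pi * (∫ x in Set.Ioi (0:ℝ), ‖f₁ x‖ ^ 2) +
        Real.pi * (∫ x in Set.Ioi (0:ℝ), ‖f₂ x‖ ^ 2) +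
        2 * (Real.sqrt 2 * Real.pi) * Real.sqrt (∫ x in Set.Ioi (0:ℝ), ‖f₁ x‖ ^ 2) *
          Real.sqrt (∫ x in Set.Ioi (0:ℝ), ‖f₂ x‖ ^ 2) := by
      rw [step2] at step1
      exact step1.trans (add_le_add (add_le_add hP₁le' hP₂le') hP₃le)
    refine step3.trans_eq ?_
    rw [Real.sq_sqrt hI₁0, Real.sq_sqrt hI₂0]
    ring
  · -- the elementary inequality
    have e1 : Real.sqrt (∫ x in Set.Ioi (0:ℝ), ‖f₁ x‖ ^ 2) ^ 2 = ∫ x in Set.Ioi (0:ℝ), ‖f₁ x‖ ^ 2 :=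
      Real.sq_sqrt hI₁0
    have e2 : Real.sqrt (∫ x in Set.Ioi (0:ℝ), ‖f₂ x‖ ^ 2) ^ 2 = ∫ x in Set.Ioi (0:ℝ), ‖f₂ x‖ ^ 2 :=
      Real.sq_sqrt hI₂0
    set a := Real.sqrt (∫ x in Set.Ioi (0:ℝ), ‖f₁ x‖ ^ 2)
    set b := Real.sqrt (∫ x in Set.Ioi (0:ℝ), ‖f₂ x‖ ^ 2)
    calc Real.pi * (a ^ 2 + 2 * Real.sqrt 2 * a * b + b ^ 2)
        ≤ Real.pi * ((1 + Real.sqrt 2) * (a ^ 2 + b ^ 2)) := by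
          nlinarith [mul_nonneg (mul_nonneg Real.pi_pos.le (Real.sqrt_nonneg 2))
            (sq_nonneg (a - b)), Real.pi_pos.le, Real.sqrt_nonneg 2, sq_nonneg (a - b)]
      _ = Real.pi * (1 + Real.sqrt 2) *
          ((∫ x in Set.Ioi (0:ℝ), ‖f₁ x‖ ^ 2) + ∫ x in Set.Ioi (0:ℝ), ‖f₂ x‖ ^ 2) := by
          rw [← e1, ← e2]; ring
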